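/- arXiv:2411.17633 — 2 statements merged into one kernel-verified Lean document; each statement's English description precedes it below -/
import Mathlib

section
/- Let v : ℝ → [0,∞) be a Lebesgue measurable function with L¹({v>0}) < ∞, such that {v^∧ = 0} does not essentially disconnect {v > 0}. Then a point x ∈ ℝ satisfies v^∧(x) > 0 if and only if both L¹((-∞,x) ∩ {v>0}) > 0 and L¹((x,∞) ∩ {v>0}) > 0. -/
open MeasureTheory Metric Set Filter Topology ENNReal NNReal

noncomputable section

/-- The set of points where the measurable set `A` has `n`-dimensional density `t`. -/
def densityPt {X : Type*} [MetricSpace X] [MeasureSpace X] (A : Set X) (t : ℝ≥0∞) : Set X :=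
  {x | Tendsto (fun ρ : ℝ => volume (A ∩ ball x ρ) / volume (ball x ρ)) (𝓝[>] 0) (𝓝 t)}

/-- The essential boundary `∂ᵉA = X \ (A^(0) ∪ A^(1))`. -/
def essBoundary {X : Type*} [MetricSpace X] [MeasureSpace X] (A : Set X) : Set X :=
  (densityPt A 0 ∪ densityPt A 1)ᶜ

/-- Approximate lower limit `f^∧(x) = sup {t : x ∈ {f > t}^(1)}`. -/
def apLower {X : Type*} [MetricSpace X] [MeasureSpace X] (f : X → ℝ) (x : X) : EReal :=
  sSup {t : EReal | ∃ s : ℝ, t = (s : EReal) ∧ x ∈ densityPt {y | s < f y} 1}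

/-- Approximate upper limit `f^∨(x) = inf {t : x ∈ {f > t}^(0)}`. -/
def apUpper {X : Type*} [MetricSpace X] [MeasureSpace X] (f : X → ℝ) (x : X) : EReal :=
  sInf {t : EReal | ∃ s : ℝ, t = (s : EReal) ∧ x ∈ densityPt {y | s < f y} 0}

/-- `K` essentially disconnects `G`: there is a nontrivial Borel partition `{Gp, Gm}` of `G`
with `μH[d]((G^(1) ∩ ∂ᵉGp ∩ ∂ᵉGm) \ K) = 0`, where `d` is the codimension-one exponent. -/
def essentiallyDisconnects {X : Type*} [MetricSpace X] [MeasureSpace X] [BorelSpace X]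
    (d : ℝ) (K G : Set X) : Prop :=
  ∃ Gp Gm : Set X, MeasurableSet Gp ∧ MeasurableSet Gm ∧
    volume (Gp ∩ Gm) = 0 ∧ volume (symmDiff G (Gp ∪ Gm)) = 0 ∧
    0 < volume Gp ∧ 0 < volume Gm ∧
    μH[d] ((densityPt G 1 ∩ essBoundary Gp ∩ essBoundary Gm) \ K) = 0

lemma densityPt_univ_one (x : ℝ) : x ∈ densityPt (univ : Set ℝ) 1 := by
  have h : ∀ᶠ ρ : ℝ in 𝓝[>] 0,
      (1 : ℝ≥0∞) = volume ((univ : Set ℝ) ∩ ball x ρ) / volume (ball x ρ) := by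
    filter_upwards [self_mem_nhdsWithin] with ρ hρ
    rw [univ_inter,
      ENNReal.div_self (ne_of_gt (measure_ball_pos _ _ hρ)) measure_ball_lt_top.ne]
  exact Tendsto.congr' h tendsto_const_nhds

lemma densityPt_zero_of_disjoint {A : Set ℝ} {y : ℝ} {ε : ℝ} (hε : 0 < ε)
    (h : Disjoint A (ball y ε)) : y ∈ densityPt A 0 := by
  have h' : ∀ᶠ ρ : ℝ in 𝓝[>] 0,
      (0 : ℝ≥0∞) = volume (A ∩ ball y ρ) / volume (ball y ρ) := by
    filter_upwards [Ioo_mem_nhdsGT_of_mem ⟨le_refl _, hε⟩] with ρ hρ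
    have he : A ∩ ball y ρ = ∅ := by
      apply eq_empty_of_subset_empty
      intro z hz
      exact (h.le_bot ⟨hz.1, ball_subset_ball hρ.2.le hz.2⟩ : z ∈ (∅ : Set ℝ))
    rw [he, measure_empty, ENNReal.zero_div]
  exact Tendsto.congr' h' tendsto_const_nhds

lemma half_ball (x ρ : ℝ) (hρ : 0 ≤ ρ) :
    ENNReal.ofReal ρ = 2⁻¹ * volume (ball x ρ) := by
  rw [Real.volume_ball, ENNReal.ofReal_mul (by norm_num : (0:ℝ) ≤ 2)]
  rw [show ENNReal.ofReal 2 = 2 by norm_num, ← mul_assoc,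
    ENNReal.inv_mul_cancel two_ne_zero (by norm_num), one_mul]

lemma side_pos {A : Set ℝ} {x : ℝ} (h : x ∈ densityPt A 1) :
    0 < volume (Iio x ∩ A) ∧ 0 < volume (Ioi x ∩ A) := by
  have key : ∀ S : Set ℝ, volume S = 0 →
      (∀ ρ : ℝ, 0 < ρ → volume (A ∩ ball x ρ) ≤ volume S + ENNReal.ofReal ρ) → False := by
    intro S hS hbound
    have hle : ∀ᶠ ρ : ℝ in 𝓝[>] 0,
        volume (A ∩ ball x ρ) / volume (ball x ρ) ≤ 2⁻¹ := by
      filter_upwards [self_mem_nhdsWithin] with ρ hρ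
      have hρ' : (0:ℝ) < ρ := hρ
      apply ENNReal.div_le_of_le_mul
      calc volume (A ∩ ball x ρ) ≤ volume S + ENNReal.ofReal ρ := hbound ρ hρ'
        _ = ENNReal.ofReal ρ := by rw [hS, zero_add]
        _ = 2⁻¹ * volume (ball x ρ) := half_ball x ρ hρ'.le
    have : (1:ℝ≥0∞) ≤ 2⁻¹ := le_of_tendsto h hle
    norm_num at this
  constructor
  · rw [pos_iff_ne_zero]
    intro h0
    refine key _ h0 fun ρ hρ => ?_
    calc volume (A ∩ ball x ρ) ≤ volume ((Iio x ∩ A) ∪ Ico x (x + ρ)) := by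
          apply measure_mono
          intro z hz
          rcases lt_or_ge z x with hzx | hzx
          · exact Or.inl ⟨hzx, hz.1⟩
          · refine Or.inr ⟨hzx, ?_⟩
            have := hz.2; rw [Real.ball_eq_Ioo] at this; exact this.2
      _ ≤ volume (Iio x ∩ A) + volume (Ico x (x + ρ)) := measure_union_le _ _
      _ = volume (Iio x ∩ A) + ENNReal.ofReal ρ := by rw [Real.volume_Ico, add_sub_cancel_left]
  · rw [pos_iff_ne_zero]
    intro h0
    refine key _ h0 fun ρ hρ => ?_
    calc volume (A ∩ ball x ρ) ≤ volume ((Ioi x ∩ A) ∪ Ioc (x - ρ) x) := by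
          apply measure_mono
          intro z hz
          rcases le_or_gt z x with hzx | hzx
          · refine Or.inr ⟨?_, hzx⟩
            have := hz.2; rw [Real.ball_eq_Ioo] at this; exact this.1
          · exact Or.inl ⟨hzx, hz.1⟩
      _ ≤ volume (Ioi x ∩ A) + volume (Ioc (x - ρ) x) := measure_union_le _ _
      _ = volume (Ioi x ∩ A) + ENNReal.ofReal ρ := by rw [Real.volume_Ioc, show x - (x - ρ) = ρ by ring]

lemma apLower_nonneg (v : ℝ → ℝ) (hnonneg : ∀ x, 0 ≤ v x) (x : ℝ) :
    (0 : EReal) ≤ apLower v x := by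
  by_contra hlt
  push_neg at hlt
  obtain ⟨s, hs1, hs2⟩ := EReal.exists_between_coe_real hlt
  have hs2' : s < 0 := by exact_mod_cast hs2
  have hmem : (s : EReal) ∈
      {t : EReal | ∃ s' : ℝ, t = (s' : EReal) ∧ x ∈ densityPt {y | s' < v y} 1} := by
    refine ⟨s, rfl, ?_⟩
    have hu : {y | s < v y} = univ :=
      eq_univ_of_forall fun y => lt_of_lt_of_le hs2' (hnonneg y)
    rw [hu]
    exact densityPt_univ_one x
  exact absurd (le_sSup hmem) (not_le.mpr hs1)

/-- Let `v : ℝ → [0,∞)` be Lebesgue measurable with `ℒ¹({v>0}) < ∞`, such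
that `{v^∧ = 0}` does not essentially disconnect `{v > 0}`. Then `v^∧(x) > 0` iff both
`ℒ¹((-∞,x) ∩ {v>0}) > 0` and `ℒ¹((x,∞) ∩ {v>0}) > 0`. -/
theorem statement0 (v : ℝ → ℝ) (hmeas : Measurable v) (hnonneg : ∀ x, 0 ≤ v x)
    (hfin : volume {x | 0 < v x} < ⊤)
    (hconn : ¬ essentiallyDisconnects 0 {x | apLower v x = 0} {x | 0 < v x}) :
    ∀ x : ℝ, 0 < apLower v x ↔
      0 < volume (Iio x ∩ {y | 0 < v y}) ∧ 0 < volume (Ioi x ∩ {y | 0 < v y}) := by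
  have hE : MeasurableSet {y : ℝ | 0 < v y} := measurableSet_lt measurable_const hmeas
  intro x
  constructor
  · intro h
    rw [apLower] at h
    obtain ⟨t, ht, h0t⟩ := lt_sSup_iff.mp h
    obtain ⟨s, rfl, hd⟩ := ht
    have hs : (0:ℝ) < s := by exact_mod_cast h0t
    have hsub : {y | s < v y} ⊆ {y | 0 < v y} := fun y hy => lt_trans hs hy
    obtain ⟨hL, hR⟩ := side_pos hd
    exact ⟨lt_of_lt_of_le hL (measure_mono (inter_subset_inter_right _ hsub)),
      lt_of_lt_of_le hR (measure_mono (inter_subset_inter_right _ hsub))⟩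
  · rintro ⟨h1, h2⟩
    by_contra hle
    have hK : apLower v x = 0 := le_antisymm (not_lt.mp hle) (apLower_nonneg v hnonneg x)
    apply hconn
    refine ⟨Iio x ∩ {y | 0 < v y}, Ioi x ∩ {y | 0 < v y},
      measurableSet_Iio.inter hE, measurableSet_Ioi.inter hE, ?_, ?_, h1, h2, ?_⟩
    · have : (Iio x ∩ {y | 0 < v y}) ∩ (Ioi x ∩ {y | 0 < v y}) = ∅ := by
        apply eq_empty_of_subset_empty
        rintro z ⟨⟨hz1, -⟩, ⟨hz2, -⟩⟩
        exact (lt_asymm (mem_Iio.mp hz1) (mem_Ioi.mp hz2)).elim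
      rw [this, measure_empty]
    · apply measure_mono_null _ (measure_singleton x)
      intro z hz
      rw [Set.mem_symmDiff] at hz
      rcases hz with ⟨hzG, hzU⟩ | ⟨hzU, hzG⟩
      · by_contra hne
        rcases lt_or_gt_of_ne hne with hlt' | hgt'
        · exact hzU (Or.inl ⟨hlt', hzG⟩)
        · exact hzU (Or.inr ⟨hgt', hzG⟩)
      · rcases hzU with ⟨-, hz⟩ | ⟨-, hz⟩ <;> exact absurd hz hzG
    · have hset : (densityPt {x | 0 < v x} 1 ∩ essBoundary (Iio x ∩ {y | 0 < v y}) ∩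
          essBoundary (Ioi x ∩ {y | 0 < v y})) \ {x | apLower v x = 0} = ∅ := by
        rw [diff_eq_empty]
        rintro y ⟨⟨-, hbp⟩, hbm⟩
        have hyx : y = x := by
          by_contra hne
          rcases lt_or_gt_of_ne hne with hlt' | hgt'
          · refine hbm (Or.inl (densityPt_zero_of_disjoint (sub_pos.mpr hlt') ?_))
            rw [Set.disjoint_left]
            rintro z ⟨hz1, -⟩ hzb
            rw [Real.ball_eq_Ioo] at hzb
            have : z < x := by linarith [hzb.2]
            exact absurd hz1 (not_lt.mpr this.le)
          · refine hbp (Or.inl (densityPt_zero_of_disjoint (sub_pos.mpr hgt') ?_))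
            rw [Set.disjoint_left]
            rintro z ⟨hz1, -⟩ hzb
            rw [Real.ball_eq_Ioo] at hzb
            have : x < z := by linarith [hzb.1]
            exact absurd hz1 (not_lt.mpr this.le)
        rw [hyx]
        exact hK
      rw [hset, measure_empty]
end
end

section
/- Let v : ℝⁿ → [0,∞) be a Lebesgue measurable function with ℒⁿ({v > 0}) < ∞. Assume {v^∧ = 0} does not essentially disconnect {v > 0}, and ℋ^{n-1}(∂{v^∧ > 0} \ {v^∧ = 0}) = 0, where ∂ denotes the topological boundary. Then the set Ω := ℝⁿ \ closure({v^∧ = 0}) is open and connected, and ℋ^{n-1}({v^∧ > 0} Δ Ω) = 0. -/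
open MeasureTheory Metric Set Filter Topology ENNReal NNReal

noncomputable section

section Aux

variable {n : ℕ}

local notation "E" => EuclideanSpace ℝ (Fin n)

lemma aux_ball_pos (x : E) {ρ : ℝ} (hρ : 0 < ρ) : volume (ball x ρ) ≠ 0 :=
  (measure_ball_pos _ _ hρ).ne'

lemma aux_ball_fin (x : E) (ρ : ℝ) : volume (ball x ρ) ≠ ⊤ :=
  measure_ball_lt_top.ne

lemma mem_densityPt_one_of_mem_interior {A : Set E} {x : E} (h : x ∈ interior A) :
    x ∈ densityPt A 1 := by
  obtain ⟨ε, hε, hball⟩ := Metric.mem_nhds_iff.1 (mem_interior_iff_mem_nhds.1 h)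
  have hev : ∀ᶠ ρ in 𝓝[>] (0:ℝ),
      (1:ℝ≥0∞) = volume (A ∩ ball x ρ) / volume (ball x ρ) := by
    filter_upwards [Ioo_mem_nhdsGT_of_mem ⟨le_refl (0:ℝ), hε⟩] with ρ hρ
    have hsub : ball x ρ ⊆ A := (ball_subset_ball hρ.2.le).trans hball
    rw [inter_eq_self_of_subset_right hsub,
      ENNReal.div_self (aux_ball_pos x hρ.1) (aux_ball_fin x ρ)]
  exact tendsto_const_nhds.congr' hev

lemma mem_densityPt_zero_of_mem_interior_compl {A : Set E} {x : E} (h : x ∈ interior Aᶜ) :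
    x ∈ densityPt A 0 := by
  obtain ⟨ε, hε, hball⟩ := Metric.mem_nhds_iff.1 (mem_interior_iff_mem_nhds.1 h)
  have hev : ∀ᶠ ρ in 𝓝[>] (0:ℝ),
      (0:ℝ≥0∞) = volume (A ∩ ball x ρ) / volume (ball x ρ) := by
    filter_upwards [Ioo_mem_nhdsGT_of_mem ⟨le_refl (0:ℝ), hε⟩] with ρ hρ
    have hsub : A ∩ ball x ρ = ∅ := by
      apply eq_empty_of_subset_empty
      intro y hy
      exact (hball (ball_subset_ball hρ.2.le hy.2)) hy.1
    rw [hsub, measure_empty, ENNReal.zero_div]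
  exact tendsto_const_nhds.congr' hev

lemma densityPt_one_mono {A B : Set E} (h : A ⊆ B) : densityPt A 1 ⊆ densityPt B 1 := by
  intro x hx
  refine tendsto_of_tendsto_of_tendsto_of_le_of_le' hx
    (tendsto_const_nhds : Tendsto (fun _ : ℝ => (1:ℝ≥0∞)) _ _) ?_ ?_
  · exact Eventually.of_forall fun ρ =>
      ENNReal.div_le_div_right (measure_mono (inter_subset_inter_left _ h)) _
  · filter_upwards [self_mem_nhdsWithin] with ρ (hρ : 0 < ρ)
    rw [← ENNReal.div_self (aux_ball_pos x hρ) (aux_ball_fin x ρ)]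
    exact ENNReal.div_le_div_right (measure_mono inter_subset_right) _

lemma aux_sphere_null (x : E) {ρ : ℝ} (hρ : 0 < ρ) : volume (sphere x ρ) = 0 :=
  Measure.addHaar_sphere_of_ne_zero volume x hρ.ne'

lemma aux_closedBall_eq (x : E) {ρ : ℝ} (hρ : 0 < ρ) (A : Set E) :
    volume (A ∩ closedBall x ρ) = volume (A ∩ ball x ρ) := by
  apply le_antisymm _ (measure_mono (inter_subset_inter_right _ ball_subset_closedBall))
  calc volume (A ∩ closedBall x ρ) ≤ volume ((A ∩ ball x ρ) ∪ sphere x ρ) := by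
        apply measure_mono
        intro y hy
        rcases lt_or_eq_of_le (mem_closedBall.1 hy.2) with h | h
        · exact Or.inl ⟨hy.1, h⟩
        · exact Or.inr h
    _ ≤ volume (A ∩ ball x ρ) + volume (sphere x ρ) := measure_union_le _ _
    _ = volume (A ∩ ball x ρ) := by rw [aux_sphere_null x hρ, add_zero]

lemma aux_densityPt_closedBall {A : Set E} {x : E} {t : ℝ≥0∞}
    (h : Tendsto (fun ρ : ℝ => volume (A ∩ closedBall x ρ) / volume (closedBall x ρ)) (𝓝[>] 0)
      (𝓝 t)) :
    x ∈ densityPt A t := by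
  apply h.congr'
  filter_upwards [self_mem_nhdsWithin] with ρ (hρ : 0 < ρ)
  have h1 : volume (closedBall x ρ) = volume (ball x ρ) := by
    have := aux_closedBall_eq x hρ (univ : Set E)
    simpa [univ_inter] using this
  rw [aux_closedBall_eq x hρ, h1]

lemma aux_ae_density (A : Set E) (hA : MeasurableSet A) :
    ∀ᵐ x : E, x ∈ densityPt A (A.indicator 1 x) := by
  filter_upwards [Besicovitch.ae_tendsto_measure_inter_div_of_measurableSet volume hA] with x hx
  exact aux_densityPt_closedBall hx

lemma aux_null_diff_densityPt (A : Set E) (hA : MeasurableSet A) :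
    volume (A \ densityPt A 1) = 0 := by
  apply measure_mono_null (t := {x : E | ¬ x ∈ densityPt A (A.indicator 1 x)}ᶜᶜ) ?_ ?_
  · intro x hx
    simp only [mem_compl_iff, not_not, mem_setOf_eq, not_not]
    intro h
    rw [indicator_of_mem hx.1] at h
    exact hx.2 (by simpa using h)
  · simpa [ae_iff] using aux_ae_density A hA

lemma aux_null_densityPt_diff (A : Set E) (hA : MeasurableSet A) :
    volume (densityPt A 1 \ A) = 0 := by
  have hne : (1 : ℝ≥0∞) ≠ 0 := one_ne_zero
  apply measure_mono_null (t := {x : E | ¬ x ∈ densityPt A (A.indicator 1 x)})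
  · intro x hx
    simp only [mem_setOf_eq]
    rw [indicator_of_notMem hx.2]
    intro h0
    exact hne (tendsto_nhds_unique hx.1 h0)
  · simpa [ae_iff] using aux_ae_density A hA

lemma aux_apLower_nonneg (v : E → ℝ) (hv : ∀ x, 0 ≤ v x) (x : E) : 0 ≤ apLower v x := by
  by_contra hcon
  push_neg at hcon
  obtain ⟨s, hs1, hs2⟩ := EReal.exists_between_coe_real hcon
  have hsle : (s : EReal) ≤ apLower v x := by
    apply le_sSup
    refine ⟨s, rfl, ?_⟩
    have : {y : E | s < v y} = univ := by
      apply eq_univ_of_forall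
      intro y
      have : (s : EReal) < ((0:ℝ) : EReal) := by exact_mod_cast hs2
      exact lt_of_lt_of_le (by exact_mod_cast this) (hv y)
    rw [this]
    exact mem_densityPt_one_of_mem_interior (by simp)
  exact absurd (lt_of_le_of_lt hsle hs1) (lt_irrefl _)

lemma aux_apLower_pos_iff (v : E → ℝ) (x : E) :
    0 < apLower v x ↔ ∃ s : ℝ, 0 < s ∧ x ∈ densityPt {y | s < v y} 1 := by
  constructor
  · intro h
    rw [apLower, lt_sSup_iff] at h
    obtain ⟨t, ⟨s, rfl, hd⟩, hts⟩ := h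
    exact ⟨s, by exact_mod_cast hts, hd⟩
  · rintro ⟨s, hs, hd⟩
    have : (s : EReal) ≤ apLower v x := le_sSup ⟨s, rfl, hd⟩
    exact lt_of_lt_of_le (by exact_mod_cast hs) this

lemma aux_symmdiff_null (v : E → ℝ) (hmeas : Measurable v) :
    volume (symmDiff {x : E | 0 < v x} {x : E | 0 < apLower v x}) = 0 := by
  set u : ℕ → ℝ := fun k => 1 / (k + 1) with hu
  have hupos : ∀ k, 0 < u k := fun k => Nat.one_div_pos_of_nat
  have hAk : ∀ k : ℕ, MeasurableSet {y : E | u k < v y} :=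
    fun k => measurableSet_lt measurable_const hmeas
  rw [symmDiff_def]
  apply measure_union_null
  · apply measure_mono_null
      (t := ⋃ k : ℕ, ({y : E | u k < v y} \ densityPt {y : E | u k < v y} 1))
    · intro x hx
      obtain ⟨k, hk⟩ := exists_nat_one_div_lt (show (0:ℝ) < v x from hx.1)
      have hk' : u k < v x := by simpa [hu] using hk
      refine mem_iUnion.2 ⟨k, hk', fun hd => ?_⟩
      exact hx.2 ((aux_apLower_pos_iff v x).2 ⟨u k, hupos k, hd⟩)
    · exact measure_iUnion_null fun k => aux_null_diff_densityPt _ (hAk k)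
  · apply measure_mono_null
      (t := ⋃ k : ℕ, (densityPt {y : E | u k < v y} 1 \ {y : E | u k < v y}))
    · intro x hx
      obtain ⟨s, hs, hd⟩ := (aux_apLower_pos_iff v x).1 hx.1
      obtain ⟨k, hk⟩ := exists_nat_one_div_lt hs
      have hk' : u k < s := by simpa [hu] using hk
      refine mem_iUnion.2 ⟨k, densityPt_one_mono (fun y hy => lt_trans hk' hy) hd, fun hm => ?_⟩
      exact hx.2 (lt_trans (hupos k) hm)
    · exact measure_iUnion_null fun k => aux_null_densityPt_diff _ (hAk k)

set_option maxHeartbeats 1000000 in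
lemma aux_volume_null_of_hausdorff {s : Set E} (h : μH[(n:ℝ) - 1] s = 0) :
    volume s = 0 := by
  have h2 : μH[(n:ℝ)] s = 0 := by
    rcases Measure.hausdorffMeasure_zero_or_top (by linarith : (n:ℝ) - 1 < (n:ℝ)) s with h' | h'
    · exact h'
    · rw [h] at h'; exact absurd h' (by simp)
  have hfr : ((Module.finrank ℝ (EuclideanSpace ℝ (Fin n))) : ℝ) = (n : ℝ) := by
    rw [finrank_euclideanSpace_fin]
  have heq : (volume : Measure E)
      = Measure.addHaarScalarFactor (volume : Measure E)
          μH[((Module.finrank ℝ (EuclideanSpace ℝ (Fin n))) : ℝ)]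
        • μH[((Module.finrank ℝ (EuclideanSpace ℝ (Fin n))) : ℝ)] :=
    Measure.isAddLeftInvariant_eq_smul _ _
  have h3 : μH[((Module.finrank ℝ (EuclideanSpace ℝ (Fin n))) : ℝ)] s = 0 := by
    have hmeq : (μH[((Module.finrank ℝ (EuclideanSpace ℝ (Fin n))) : ℝ)] : Measure E)
        = μH[(n:ℝ)] := by rw [hfr]
    rw [hmeq]; exact h2
  rw [heq, Measure.smul_apply, h3, smul_zero]

end Aux

/-- Let `v : ℝⁿ → [0,∞)` be Lebesgue measurable with `ℒⁿ({v>0}) < ∞`.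
Assume `{v^∧ = 0}` does not essentially disconnect `{v > 0}`, and
`ℋ^{n-1}(∂{v^∧ > 0} \ {v^∧ = 0}) = 0` (topological boundary). Then
`Ω := ℝⁿ \ closure({v^∧ = 0})` is open and connected, and `ℋ^{n-1}({v^∧ > 0} Δ Ω) = 0`. -/
theorem statement6 (n : ℕ) (v : EuclideanSpace ℝ (Fin n) → ℝ) (hmeas : Measurable v)
    (hnonneg : ∀ x, 0 ≤ v x) (hfin : volume {x | 0 < v x} < ⊤)
    (hconn : ¬ essentiallyDisconnects ((n : ℝ) - 1) {x | apLower v x = 0} {x | 0 < v x})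
    (hbdry : μH[(n : ℝ) - 1] (frontier {x | 0 < apLower v x} \ {x | apLower v x = 0}) = 0) :
    IsOpen (closure {x | apLower v x = 0})ᶜ ∧
    IsPreconnected (closure {x | apLower v x = 0})ᶜ ∧
    μH[(n : ℝ) - 1] (symmDiff {x | 0 < apLower v x} (closure {x | apLower v x = 0})ᶜ) = 0 := by
  have hZP : {x : EuclideanSpace ℝ (Fin n) | apLower v x = 0}ᶜ = {x | 0 < apLower v x} := by
    ext x
    simp only [mem_compl_iff, mem_setOf_eq]
    constructor
    · intro h
      exact lt_of_le_of_ne (aux_apLower_nonneg v hnonneg x) (Ne.symm h)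
    · intro h h0
      rw [h0] at h
      exact lt_irrefl _ h
  have hΩ : (closure {x : EuclideanSpace ℝ (Fin n) | apLower v x = 0})ᶜ
      = interior {x | 0 < apLower v x} := by
    rw [← hZP, interior_compl]
  have hΩopen : IsOpen (closure {x : EuclideanSpace ℝ (Fin n) | apLower v x = 0})ᶜ :=
    isClosed_closure.isOpen_compl
  have hsd : symmDiff {x : EuclideanSpace ℝ (Fin n) | 0 < apLower v x}
      (closure {x | apLower v x = 0})ᶜ
      ⊆ frontier {x | 0 < apLower v x} \ {x | apLower v x = 0} := by
    rw [hΩ]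
    intro x hx
    rcases Set.mem_symmDiff.1 hx with ⟨hx1, hx2⟩ | ⟨hx1, hx2⟩
    · constructor
      · exact ⟨subset_closure hx1, hx2⟩
      · intro hz
        exact (ne_of_gt hx1) hz
    · exact absurd (interior_subset hx1) hx2
  refine ⟨hΩopen, ?_, measure_mono_null hsd hbdry⟩
  rcases Nat.eq_zero_or_pos n with hn | hn
  · subst hn
    exact Set.Subsingleton.isPreconnected (Set.subsingleton_of_subsingleton)
  · by_contra hpc
    rw [IsPreconnected] at hpc
    push_neg at hpc
    obtain ⟨U, V, hU, hV, hUV, hU1, hV1, hdisj⟩ := hpc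
    set Ω := (closure {x : EuclideanSpace ℝ (Fin n) | apLower v x = 0})ᶜ with hΩdef
    apply hconn
    refine ⟨Ω ∩ U, Ω ∩ V, (hΩopen.inter hU).measurableSet, (hΩopen.inter hV).measurableSet,
      ?_, ?_, ?_, ?_, ?_⟩
    · apply measure_mono_null (t := Ω ∩ (U ∩ V))
      · intro z hz
        exact ⟨hz.1.1, hz.1.2, hz.2.2⟩
      · rw [hdisj]; exact measure_empty
    · have hunion : (Ω ∩ U) ∪ (Ω ∩ V) = Ω := by
        rw [← inter_union_distrib_left]
        exact inter_eq_self_of_subset_left hUV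
      rw [hunion]
      have h1 := aux_symmdiff_null v hmeas
      have h2 : volume (symmDiff {x : EuclideanSpace ℝ (Fin n) | 0 < apLower v x} Ω) = 0 :=
        aux_volume_null_of_hausdorff (measure_mono_null hsd hbdry)
      have h3 := measure_mono (μ := (volume : Measure (EuclideanSpace ℝ (Fin n))))
        (symmDiff_triangle {x : EuclideanSpace ℝ (Fin n) | 0 < v x} {x | 0 < apLower v x} Ω)
      have h4 := le_trans h3 (measure_union_le _ _)
      rw [h1, h2, add_zero] at h4
      exact le_antisymm h4 zero_le
    · exact (hΩopen.inter hU).measure_pos volume hU1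
    · exact (hΩopen.inter hV).measure_pos volume hV1
    · apply measure_mono_null _ hbdry
      intro w hw
      obtain ⟨hw1, hw2⟩ := hw
      have hwΩ : w ∉ Ω := by
        intro hwΩ
        rcases hUV hwΩ with hwU | hwV
        · exact hw1.1.2 (Or.inr (mem_densityPt_one_of_mem_interior
            (by rw [(hΩopen.inter hU).interior_eq]; exact ⟨hwΩ, hwU⟩)))
        · have hsubc : Ω ∩ V ⊆ (Ω ∩ U)ᶜ := by
            intro z hz hz'
            have hzz : z ∈ Ω ∩ (U ∩ V) := ⟨hz.1, hz'.2, hz.2⟩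
            rw [hdisj] at hzz
            exact hzz
          exact hw1.1.2 (Or.inl (mem_densityPt_zero_of_mem_interior_compl
            (interior_maximal hsubc (hΩopen.inter hV) ⟨hwΩ, hwV⟩)))
      have hwcl : w ∈ closure {x : EuclideanSpace ℝ (Fin n) | apLower v x = 0} := by
        by_contra hwc
        exact hwΩ hwc
      constructor
      · have : frontier {x : EuclideanSpace ℝ (Fin n) | 0 < apLower v x}
            = frontier {x | apLower v x = 0} := by
          rw [← hZP, frontier_compl]
        rw [this]
        exact ⟨hwcl, fun hi => hw2 (interior_subset hi)⟩
      · exact hw2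
end
end
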